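/- Let φ : ℝ × (0, ∞) → ℝ be an arbitrary real-valued function. Then for all r > 0 and all (s,r) with φ(s,r) > 0, 1/( φ(s,r) + K_{n=1}^∞ (n²r²/φ(s,r)) ) = (1/r)·∫_0^∞ e^{−(φ(s,r)/r)·x}/cosh x dx, where φ(s,r) + K_{n=1}^∞ (n²r²/φ(s,r)) denotes the limit of the convergents of the generalized continued fraction with integer part φ(s,r), partial numerators a_n = n²r² and partial denominators b_n = φ(s,r). -/

import Mathlib

open Filter Real

/-- Numerators of the convergents of a generalized continued fraction with
integer part `b₀`, partial numerators `a n` and partial denominators `b n` (for `n ≥ 1`). -/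
noncomputable def cfNum (b₀ : ℝ) (a b : ℕ → ℝ) : ℕ → ℝ
  | 0 => b₀
  | 1 => b 1 * b₀ + a 1
  | n + 2 => b (n + 2) * cfNum b₀ a b (n + 1) + a (n + 2) * cfNum b₀ a b n

/-- Denominators of the convergents of a generalized continued fraction. -/
noncomputable def cfDen (a b : ℕ → ℝ) : ℕ → ℝ
  | 0 => 1
  | 1 => b 1
  | n + 2 => b (n + 2) * cfDen a b (n + 1) + a (n + 2) * cfDen a b n

/-- `IsCFLimit b₀ a b L` means: the convergents of the generalized continued fraction
`b₀ + a 1 / (b 1 + a 2 / (b 2 + ⋯))` tend to `L`. -/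
def IsCFLimit (b₀ : ℝ) (a b : ℕ → ℝ) (L : ℝ) : Prop :=
  Filter.Tendsto (fun n => cfNum b₀ a b n / cfDen a b n) Filter.atTop (nhds L)


open MeasureTheory Set
open scoped ENNReal

noncomputable def ig (c : ℝ) (n : ℕ) (x : ℝ) : ℝ :=
  Real.exp (-c * x) * (Real.sinh x ^ n / Real.cosh x ^ (n + 1))

lemma one_le_cosh' (x : ℝ) : 1 ≤ Real.cosh x := by
  nlinarith [Real.cosh_sq x, Real.cosh_pos x, sq_nonneg (Real.sinh x)]

lemma ig_cont (c : ℝ) (n : ℕ) : Continuous (ig c n) := by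
  unfold ig
  exact ((Real.continuous_exp.comp (continuous_const.mul continuous_id)).mul
    ((Real.continuous_sinh.pow n).div (Real.continuous_cosh.pow (n+1))
      (fun x => by positivity)))

lemma ig_nonneg (c : ℝ) (n : ℕ) {x : ℝ} (hx : 0 ≤ x) : 0 ≤ ig c n x := by
  unfold ig
  have := Real.sinh_nonneg_iff.2 hx
  positivity

lemma ig_le (c : ℝ) (n : ℕ) {x : ℝ} (hx : 0 ≤ x) : ig c n x ≤ Real.exp (-c * x) := by
  unfold ig
  have h1 : 0 ≤ Real.sinh x := Real.sinh_nonneg_iff.2 hx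
  have h2 : Real.sinh x ≤ Real.cosh x := (Real.sinh_lt_cosh x).le
  have h3 : (0:ℝ) < Real.cosh x ^ (n+1) := by positivity
  have h4 : Real.sinh x ^ n / Real.cosh x ^ (n + 1) ≤ 1 := by
    rw [div_le_one h3]
    calc Real.sinh x ^ n ≤ Real.cosh x ^ n := pow_le_pow_left₀ h1 h2 n
    _ ≤ Real.cosh x ^ (n+1) := pow_le_pow_right₀ (one_le_cosh' x) (by omega)
  nlinarith [Real.exp_pos (-c*x), ig_nonneg c n hx]

lemma ig_integrableOn (c : ℝ) (hc : 0 < c) (n : ℕ) : IntegrableOn (ig c n) (Ioi 0) := by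
  refine Integrable.mono (exp_neg_integrableOn_Ioi 0 hc) ((ig_cont c n).aestronglyMeasurable) ?_
  filter_upwards [ae_restrict_mem measurableSet_Ioi] with x hx
  rw [Real.norm_eq_abs, Real.norm_eq_abs, abs_of_nonneg (ig_nonneg c n (le_of_lt hx)),
    abs_of_nonneg (Real.exp_pos _).le]
  exact ig_le c n (le_of_lt hx)

noncomputable def gI (c : ℝ) (n : ℕ) : ℝ := ∫ x in Ioi (0:ℝ), ig c n x

lemma gI_pos (c : ℝ) (hc : 0 < c) (n : ℕ) : 0 < gI c n := by
  rw [gI, setIntegral_pos_iff_support_of_nonneg_ae]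
  · have hsub : Ioi (0:ℝ) ⊆ Function.support (ig c n) ∩ Ioi 0 := by
      intro x hx
      refine ⟨?_, hx⟩
      have h1 : 0 < Real.sinh x := Real.sinh_pos_iff.2 hx
      have h2 : 0 < Real.cosh x := Real.cosh_pos x
      have : 0 < ig c n x := by unfold ig; positivity
      exact ne_of_gt this
    have h0 : (0:ℝ≥0∞) < volume (Ioi (0:ℝ)) := by rw [Real.volume_Ioi]; norm_num
    exact lt_of_lt_of_le h0 (measure_mono hsub)
  · filter_upwards [ae_restrict_mem measurableSet_Ioi] with x hx
    exact ig_nonneg c n (le_of_lt hx)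
  · exact ig_integrableOn c hc n

lemma ig_hasDerivAt (c : ℝ) (n : ℕ) (x : ℝ) :
    HasDerivAt (ig c n)
      ((n:ℝ) * ig c (n-1) x - ((n:ℝ)+1) * ig c (n+1) x - c * ig c n x) x := by
  have hch : (0:ℝ) < Real.cosh x := Real.cosh_pos x
  have he : HasDerivAt (fun y : ℝ => Real.exp (-c*y)) (-c * Real.exp (-c*x)) x := by
    simpa [mul_comm] using (HasDerivAt.exp ((hasDerivAt_id x).const_mul (-c)))
  have hs : HasDerivAt (fun y : ℝ => Real.sinh y ^ n)
      ((n:ℝ) * Real.sinh x ^ (n-1) * Real.cosh x) x := (Real.hasDerivAt_sinh x).pow n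
  have hc2 : HasDerivAt (fun y : ℝ => Real.cosh y ^ (n+1))
      (((n:ℝ)+1) * Real.cosh x ^ n * Real.sinh x) x := by
    have h := (Real.hasDerivAt_cosh x).pow (n+1); simp at h; exact h
  have hden : Real.cosh x ^ (n+1) ≠ 0 := by positivity
  have hdiv := hs.div hc2 hden
  have hmul := he.mul hdiv
  refine hmul.congr_deriv ?_
  unfold ig
  simp only [Pi.div_apply]
  obtain _ | m := n
  · field_simp
    ring
  · have h1 : (m+1) - 1 = m := rfl
    rw [h1]
    push_cast
    field_simp
    ring

lemma exp_tendsto (c : ℝ) (hc : 0 < c) :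
    Tendsto (fun x : ℝ => Real.exp (-c*x)) atTop (nhds 0) := by
  have h1 : Tendsto (fun x : ℝ => -(c*x)) atTop atBot :=
    tendsto_neg_atTop_atBot.comp (Tendsto.const_mul_atTop hc tendsto_id)
  have h2 := Real.tendsto_exp_atBot.comp h1
  have h3 : (Real.exp ∘ fun x : ℝ => -(c*x)) = fun x : ℝ => Real.exp (-c*x) := by
    funext x; simp [Function.comp, neg_mul]
  rwa [h3] at h2

lemma ig_tendsto (c : ℝ) (hc : 0 < c) (n : ℕ) :
    Tendsto (ig c n) atTop (nhds 0) := by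
  refine squeeze_zero_norm' ?_ (exp_tendsto c hc)
  filter_upwards [eventually_ge_atTop (0:ℝ)] with x hx
  rw [Real.norm_eq_abs, abs_of_nonneg (ig_nonneg c n hx)]
  exact ig_le c n hx

lemma gI_ibp (c : ℝ) (hc : 0 < c) (n : ℕ) :
    (n:ℝ) * gI c (n-1) - ((n:ℝ)+1) * gI c (n+1) - c * gI c n = - ig c n 0 := by
  have hint : IntegrableOn (fun x => (n:ℝ) * ig c (n-1) x - ((n:ℝ)+1) * ig c (n+1) x
      - c * ig c n x) (Ioi (0:ℝ)) :=
    (((ig_integrableOn c hc (n-1)).const_mul _).sub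
      ((ig_integrableOn c hc (n+1)).const_mul _)).sub ((ig_integrableOn c hc n).const_mul _)
  have h := integral_Ioi_of_hasDerivAt_of_tendsto' (a := 0)
    (fun x _ => ig_hasDerivAt c n x) hint (ig_tendsto c hc n)
  have hA : IntegrableOn (fun x => (n:ℝ) * ig c (n-1) x) (Ioi (0:ℝ)) :=
    (ig_integrableOn c hc (n-1)).const_mul _
  have hB : IntegrableOn (fun x => ((n:ℝ)+1) * ig c (n+1) x) (Ioi (0:ℝ)) :=
    (ig_integrableOn c hc (n+1)).const_mul _
  have hC : IntegrableOn (fun x => c * ig c n x) (Ioi (0:ℝ)) :=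
    (ig_integrableOn c hc n).const_mul _
  have hAB : IntegrableOn (fun x => (n:ℝ) * ig c (n-1) x - ((n:ℝ)+1) * ig c (n+1) x)
      (Ioi (0:ℝ)) := hA.sub hB
  rw [integral_sub hAB hC, integral_sub hA hB, integral_const_mul, integral_const_mul,
    integral_const_mul] at h
  rw [gI, gI, gI]
  linarith [h]

lemma gI_rec0 (c : ℝ) (hc : 0 < c) : c * gI c 0 = 1 - gI c 1 := by
  have := gI_ibp c hc 0
  simp [ig] at this
  linarith

lemma gI_recS (c : ℝ) (hc : 0 < c) (m : ℕ) :
    c * gI c (m+1) = ((m:ℝ)+1) * gI c m - ((m:ℝ)+2) * gI c (m+2) := by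
  have h := gI_ibp c hc (m+1)
  have h1 : (m+1) - 1 = m := rfl
  rw [h1] at h
  have h2 : ig c (m+1) 0 = 0 := by simp [ig]
  rw [h2] at h
  push_cast at h ⊢
  linarith

lemma gI_eq (c : ℝ) : gI c 0 = ∫ x in Set.Ioi (0:ℝ), Real.exp (-c * x) / Real.cosh x := by
  unfold gI
  norm_num [ig, mul_one_div, div_eq_mul_inv]

theorem cf_integral_representation_exp (φ : ℝ → ℝ → ℝ) (s r : ℝ) (hr : 0 < r)
    (hφ : 0 < φ s r) (K : ℝ)
    (hK : IsCFLimit 0 (fun n => (n : ℝ) ^ 2 * r ^ 2) (fun _ => φ s r) K) :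
    1 / (φ s r + K) =
      (1 / r) * ∫ x in Set.Ioi (0 : ℝ), Real.exp (-(φ s r / r) * x) / Real.cosh x := by
  unfold IsCFLimit at hK
  set t := φ s r with htdef
  set c := t / r with hcdef
  have hc : 0 < c := div_pos hφ hr
  set g : ℕ → ℝ := fun n => gI c n with hgdef
  have hg : ∀ n, 0 < g n := fun n => gI_pos c hc n
  have htc : t = c * r := by rw [hcdef]; field_simp
  set T : ℕ → ℝ := fun m => ((m:ℝ)+1) * r * g (m+1) / g m with hTdef
  have hT : ∀ m, 0 < T m := by
    intro m
    have h1 := hg m; have h2 := hg (m+1)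
    rw [hTdef]
    have : (0:ℝ) < (m:ℝ)+1 := by positivity
    positivity
  -- recurrences scaled by r
  have hrecS : ∀ m : ℕ, t * g (m+1) = ((m:ℝ)+1) * r * g m - ((m:ℝ)+2) * r * g (m+2) := by
    intro m
    have h := gI_recS c hc m
    rw [htc]
    have hG : g m = gI c m := rfl
    have hG1 : g (m+1) = gI c (m+1) := rfl
    have hG2 : g (m+2) = gI c (m+2) := rfl
    rw [hG, hG1, hG2]
    linear_combination r * h
  have hrec0 : t * g 0 = r - r * g 1 := by
    have h := gI_rec0 c hc
    rw [htc]
    have hG : g 0 = gI c 0 := rfl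
    have hG1 : g 1 = gI c 1 := rfl
    rw [hG, hG1]
    linear_combination r * h
  -- tail identity
  have hTmul : ∀ m : ℕ, T m * (t + T (m+1)) = ((m:ℝ)+1)^2 * r^2 := by
    intro m
    have h := hrecS m
    have h0 := (hg m).ne'
    have h1 := (hg (m+1)).ne'
    rw [hTdef]
    field_simp
    have e : m + 1 + 1 = m + 2 := rfl
    rw [e]; push_cast
    linear_combination h
  set W : ℝ := r / g 0 with hWdef
  have hWt : W - t = T 0 := by
    have h0 := (hg 0).ne'
    rw [hWdef, hTdef]
    field_simp
    linear_combination -hrec0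
  -- continued fraction machinery
  set A : ℕ → ℝ := fun n => (n : ℝ) ^ 2 * r ^ 2 with hAdef
  set B : ℕ → ℝ := fun _ => t with hBdef
  set p : ℕ → ℝ := fun n => cfNum 0 A B n with hpdef
  set q : ℕ → ℝ := fun n => cfDen A B n with hqdef
  have hq01 : q 0 = 1 := by rw [hqdef]; simp [cfDen]
  have hq1 : q 1 = t := by rw [hqdef]; simp [cfDen, hBdef]
  have hp0 : p 0 = 0 := by rw [hpdef]; simp [cfNum]
  have hp1 : p 1 = r ^ 2 := by rw [hpdef]; simp [cfNum, hAdef]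
  have hqS : ∀ n : ℕ, q (n+2) = t * q (n+1) + ((n:ℝ)+2)^2 * r^2 * q n := by
    intro n
    rw [hqdef]
    show cfDen A B (n+2) = _
    rw [cfDen]
    push_cast [hAdef, hBdef]
    ring
  have hpS : ∀ n : ℕ, p (n+2) = t * p (n+1) + ((n:ℝ)+2)^2 * r^2 * p n := by
    intro n
    rw [hpdef]
    show cfNum 0 A B (n+2) = _
    rw [cfNum]
    push_cast [hAdef, hBdef]
    ring
  have hWgeq : W = r / g 0 := hWdef
  clear_value T W A B p q
  have hqpos : ∀ n, 0 < q n ∧ 0 < q (n+1) := by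
    intro n
    induction n with
    | zero => exact ⟨by rw [hq01]; norm_num, by rw [hq1]; exact hφ⟩
    | succ n ih =>
      refine ⟨ih.2, ?_⟩
      rw [hqS n]
      have h1 := ih.1; have h2 := ih.2
      have h3 : (0:ℝ) < ((n:ℝ)+2)^2 * r^2 := by positivity
      nlinarith
  have key : ∀ n : ℕ, (W - t) * (q (n+1) + T (n+1) * q n) = p (n+1) + T (n+1) * p n := by
    intro n
    induction n with
    | zero =>
      rw [hq1, hq01, hp1, hp0, hWt]
      have h := hTmul 0
      norm_num at h ⊢
      linarith
    | succ n ih =>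
      rw [hqS n, hpS n]
      have h := hTmul (n+1)
      push_cast at h
      linear_combination (t + T (n+2)) * ih + (p n - (W - t) * q n) * h
  have hB : ∀ n : ℕ, 0 < q (n+1) + T (n+1) * q n := by
    intro n
    have := (hqpos n).1; have := (hqpos n).2; have := hT (n+1)
    positivity
  have hdiff : ∀ n : ℕ, W - t - p (n+1) / q (n+1) =
      (p n / q n - p (n+1) / q (n+1)) * (T (n+1) * q n / (q (n+1) + T (n+1) * q n)) := by
    intro n
    have hWt2 : W - t = (p (n+1) + T (n+1) * p n) / (q (n+1) + T (n+1) * q n) := by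
      rw [eq_div_iff (hB n).ne']; exact key n
    rw [hWt2]
    have h0 := (hqpos n).1.ne'
    have h1 := (hqpos n).2.ne'
    have h2 := (hB n).ne'
    field_simp
    ring
  have hbound : ∀ n : ℕ, |W - t - p (n+1) / q (n+1)| ≤ |p n / q n - p (n+1) / q (n+1)| := by
    intro n
    rw [hdiff n, abs_mul]
    have hnum : 0 ≤ T (n+1) * q n := mul_nonneg (hT _).le (hqpos n).1.le
    have h1 : T (n+1) * q n / (q (n+1) + T (n+1) * q n) ≤ 1 := by
      rw [div_le_one (hB n)]
      nlinarith [(hqpos n).2]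
    rw [abs_of_nonneg (div_nonneg hnum (hB n).le)]
    exact mul_le_of_le_one_right (abs_nonneg _) h1
  -- convergence
  have hKpq : Tendsto (fun n => p n / q n) atTop (nhds K) := by
    rw [hpdef, hqdef]; simpa using hK
  have hC1 : Tendsto (fun n => p (n+1) / q (n+1)) atTop (nhds K) := by
    have := hKpq.comp (tendsto_add_atTop_nat 1)
    simpa [Function.comp_def] using this
  have hdiff0 : Tendsto (fun n => p n / q n - p (n+1) / q (n+1)) atTop (nhds 0) := by
    simpa using hKpq.sub hC1
  have habs : Tendsto (fun n => |p n / q n - p (n+1) / q (n+1)|) atTop (nhds 0) := by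
    simpa using hdiff0.abs
  have h2 : Tendsto (fun n => W - t - p (n+1) / q (n+1)) atTop (nhds 0) := by
    refine squeeze_zero_norm (fun n => ?_) habs
    rw [Real.norm_eq_abs]
    exact hbound n
  have h3 : Tendsto (fun n => p (n+1) / q (n+1)) atTop (nhds (W - t)) := by
    have h4 := (tendsto_const_nhds (α := ℕ) (x := W - t)).sub h2
    simpa using h4
  have hKW : K = W - t := tendsto_nhds_unique hC1 h3
  -- finish
  have htK : t + K = W := by rw [hKW]; ring
  rw [htK]
  have hint : (∫ x in Set.Ioi (0:ℝ), Real.exp (-c * x) / Real.cosh x) = g 0 :=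
    (gI_eq c).symm
  have hgoal : (∫ x in Set.Ioi (0:ℝ), Real.exp (-(t/r) * x) / Real.cosh x) = g 0 := by
    rw [← hcdef] at *
    exact hint
  rw [hcdef] at hint
  rw [hint]
  rw [hWdef]
  have h0 := (hg 0).ne'
  field_simp
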